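/- Let G = ⟨(12)(34), (13)(24)⟩ ≅ C₂ × C₂ act on k[x₁,x₂,x₃,x₄] over k of characteristic 2 by permuting variables, and let I = Tr^G(k[x₁,x₂,x₃,x₄]) ⊂ k[x₁,...,x₄]^G. Then N = x₁x₂x₃x₄ is a non-zerodivisor on the quotient ring k[x₁,...,x₄]^G / I. -/

import Mathlib

set_option maxHeartbeats 1000000
set_option synthInstance.maxHeartbeats 400000
set_option linter.unusedSectionVars false


open MvPolynomial

/-- The Klein four group `C₂ × C₂`. -/
abbrev K4 := Multiplicative (ZMod 2 × ZMod 2)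

/-- The first generator `σ₁` of the Klein four group. -/
def s1 : K4 := Multiplicative.ofAdd (1, 0)

/-- The second generator `σ₂` of the Klein four group. -/
def s2 : K4 := Multiplicative.ofAdd (0, 1)

/-- The permutation `(12)(34)` of the four variables. -/
def e1 : Equiv.Perm (Fin 4) := Equiv.swap 0 1 * Equiv.swap 2 3

/-- The permutation `(13)(24)` of the four variables. -/
def e2 : Equiv.Perm (Fin 4) := Equiv.swap 0 2 * Equiv.swap 1 3

/-- The permutation action of the Klein four group on the four variables. -/
def permOf (g : K4) : Equiv.Perm (Fin 4) :=
  e1 ^ (Multiplicative.toAdd g).1.val * e2 ^ (Multiplicative.toAdd g).2.val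

/-- The ring of `H`-invariants in `R`. -/
def invSub (G R : Type) [Group G] [CommRing R] [MulSemiringAction G R]
    (H : Subgroup G) : Subring R where
  carrier := {f : R | ∀ h : H, (h : G) • f = f}
  mul_mem' := fun ha hb h => by rw [smul_mul', ha h, hb h]
  one_mem' := fun h => smul_one _
  add_mem' := fun ha hb h => by rw [smul_add, ha h, hb h]
  zero_mem' := fun h => smul_zero _
  neg_mem' := fun ha h => by rw [smul_neg, (ha h : _)]

/-- The transfer ideal `I = Tr^G(k[V])·k[V]^G`, where `Tr^G(f) = Σ_{g∈G} g·f`. -/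
noncomputable def transferIdealTriv (G R : Type) [Group G] [Fintype G] [CommRing R]
    [MulSemiringAction G R] : Ideal (invSub G R ⊤) :=
  Ideal.span {y | ∃ f : R, (y : R) = ∑ g : G, g • f}
section Aux

variable {k : Type} [Field k] [CharP k 2]

/-- The exponent vector `(1,1,1,1)`. -/
noncomputable def sOne : Fin 4 →₀ ℕ := Finsupp.equivFunOnFinite.symm 1

lemma sOne_apply (i : Fin 4) : sOne i = 1 := rfl

lemma N_eq : (X 0 * X 1 * X 2 * X 3 : MvPolynomial (Fin 4) k) = monomial sOne 1 := by
  have h : sOne = Finsupp.single (0 : Fin 4) 1 + Finsupp.single 1 1 +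
      Finsupp.single 2 1 + Finsupp.single 3 1 := by
    ext i
    fin_cases i <;> simp [sOne_apply]
  simp only [h, X, monomial_mul, mul_one]

lemma rename_N (σ : Equiv.Perm (Fin 4)) :
    rename σ (X 0 * X 1 * X 2 * X 3 : MvPolynomial (Fin 4) k) = X 0 * X 1 * X 2 * X 3 := by
  have h : (X 0 * X 1 * X 2 * X 3 : MvPolynomial (Fin 4) k) = ∏ i, X i := by
    rw [Fin.prod_univ_four]
  rw [h, map_prod]
  simp only [rename_X]
  exact Equiv.prod_comp σ X

/-- Core lemma: if `N * u` is a transfer, then `u` is a transfer. -/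
lemma core [MulSemiringAction K4 (MvPolynomial (Fin 4) k)]
    (hact : ∀ (g : K4) (f : MvPolynomial (Fin 4) k), g • f = rename (permOf g) f)
    (u f : MvPolynomial (Fin 4) k)
    (h : monomial sOne (1 : k) * u = ∑ g : K4, g • f) :
    ∃ q : MvPolynomial (Fin 4) k, u = ∑ g : K4, g • q := by
  set N : MvPolynomial (Fin 4) k := monomial sOne 1 with hN
  have hNg : ∀ g : K4, g • N = N := by
    intro g
    rw [hN, ← N_eq, hact, rename_N, N_eq]
  set q := MvPolynomial.divMonomial f sOne with hq
  set r := MvPolynomial.modMonomial f sOne with hr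
  have hsplit : f = N * q + r := (MvPolynomial.divMonomial_add_modMonomial f sOne).symm
  have hTr : (∑ g : K4, g • f) = N * (∑ g : K4, g • q) + ∑ g : K4, g • r := by
    rw [Finset.mul_sum, ← Finset.sum_add_distrib]
    refine Finset.sum_congr rfl fun g _ => ?_
    rw [hsplit, smul_add, smul_mul', hNg g]
  refine ⟨q, ?_⟩
  have hv : N * (u - ∑ g : K4, g • q) = ∑ g : K4, g • r := by
    rw [mul_sub, h, hTr]; ring
  have hv0 : u - ∑ g : K4, g • q = 0 := by
    apply MvPolynomial.ext
    intro d
    have h1 : coeff d (u - ∑ g : K4, g • q) =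
        coeff (sOne + d) (N * (u - ∑ g : K4, g • q)) := by
      rw [hN, coeff_monomial_mul, one_mul]
    rw [h1, hv, coeff_zero]
    rw [coeff_sum]
    refine Finset.sum_eq_zero fun g _ => ?_
    rw [hact]
    set σ := permOf g
    set d' : Fin 4 →₀ ℕ := Finsupp.mapDomain σ.symm (sOne + d) with hd'
    have hmap : Finsupp.mapDomain σ d' = sOne + d := by
      rw [hd', ← Finsupp.mapDomain_comp]
      simp
    have hcoeff : coeff (sOne + d) (rename (⇑σ) r) = coeff d' r := by
      rw [← hmap]
      exact coeff_rename_mapDomain σ σ.injective r d'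
    rw [hcoeff]
    apply MvPolynomial.coeff_modMonomial_of_le
    intro i
    have : d' i = (sOne + d) (σ i) := by
      rw [hd', Finsupp.mapDomain_equiv_apply]
      simp
    rw [this, sOne_apply, Finsupp.add_apply, sOne_apply]
    omega
  linear_combination hv0

lemma mem_transferIdeal [MulSemiringAction K4 (MvPolynomial (Fin 4) k)]
    (z : invSub K4 (MvPolynomial (Fin 4) k) ⊤) :
    z ∈ transferIdealTriv K4 (MvPolynomial (Fin 4) k) ↔
      ∃ f : MvPolynomial (Fin 4) k, (z : MvPolynomial (Fin 4) k) = ∑ g : K4, g • f := by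
  constructor
  · intro hz
    let J : Ideal (invSub K4 (MvPolynomial (Fin 4) k) ⊤) :=
      { carrier := {z | ∃ f : MvPolynomial (Fin 4) k,
          (z : MvPolynomial (Fin 4) k) = ∑ g : K4, g • f}
        add_mem' := by
          rintro a b ⟨f, hf⟩ ⟨f', hf'⟩
          refine ⟨f + f', ?_⟩
          push_cast [hf, hf', ← Finset.sum_add_distrib, smul_add]
          rfl
        zero_mem' := ⟨0, by simp⟩
        smul_mem' := by
          rintro c z ⟨f, hf⟩
          refine ⟨(c : MvPolynomial (Fin 4) k) * f, ?_⟩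
          have hcinv : ∀ g : K4, g • (c : MvPolynomial (Fin 4) k) = c :=
            fun g => c.2 ⟨g, Subgroup.mem_top g⟩
          simp only [smul_eq_mul]
          push_cast
          rw [hf, Finset.mul_sum]
          refine Finset.sum_congr rfl fun g _ => ?_
          rw [smul_mul', hcinv g] }
    have hle : transferIdealTriv K4 (MvPolynomial (Fin 4) k) ≤ J :=
      Ideal.span_le.mpr fun y hy => hy
    exact hle hz
  · rintro ⟨f, hf⟩
    exact Ideal.subset_span ⟨f, hf⟩

end Aux



/-- for the Klein four group permuting the variables of
`k[x₁,x₂,x₃,x₄]` (characteristic 2) via `(12)(34)` and `(13)(24)`, the invariant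
`N = x₁x₂x₃x₄` is a non-zerodivisor on `k[x₁,…,x₄]^G / I`, where
`I = Tr^G(k[x₁,…,x₄])` is the transfer ideal. -/
theorem klein_regular_N_nonzerodivisor
    (k : Type) [Field k] [CharP k 2]
    [MulSemiringAction K4 (MvPolynomial (Fin 4) k)]
    [SMulCommClass K4 k (MvPolynomial (Fin 4) k)]
    (hact : ∀ (g : K4) (f : MvPolynomial (Fin 4) k), g • f = rename (permOf g) f) :
    ∃ y : invSub K4 (MvPolynomial (Fin 4) k) ⊤,
      (y : MvPolynomial (Fin 4) k) = X 0 * X 1 * X 2 * X 3 ∧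
      Ideal.Quotient.mk (transferIdealTriv K4 (MvPolynomial (Fin 4) k)) y ∈
        nonZeroDivisors ((invSub K4 (MvPolynomial (Fin 4) k) ⊤) ⧸
          transferIdealTriv K4 (MvPolynomial (Fin 4) k)) := by
  have hinv : ∀ h : (⊤ : Subgroup K4),
      (h : K4) • (X 0 * X 1 * X 2 * X 3 : MvPolynomial (Fin 4) k) =
        X 0 * X 1 * X 2 * X 3 := by
    intro h
    rw [hact, rename_N]
  refine ⟨⟨X 0 * X 1 * X 2 * X 3, hinv⟩, rfl, ?_⟩
  rw [mem_nonZeroDivisors_iff_right]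
  intro x hx
  obtain ⟨z, rfl⟩ := Ideal.Quotient.mk_surjective x
  rw [← map_mul, Ideal.Quotient.eq_zero_iff_mem] at hx
  rw [mem_transferIdeal] at hx
  obtain ⟨f, hf⟩ := hx
  have hzy : ((z * ⟨X 0 * X 1 * X 2 * X 3, hinv⟩ :
      invSub K4 (MvPolynomial (Fin 4) k) ⊤) : MvPolynomial (Fin 4) k) =
      monomial sOne 1 * (z : MvPolynomial (Fin 4) k) := by
    push_cast
    rw [← N_eq]
    ring
  rw [hzy] at hf
  obtain ⟨q, hq⟩ := core hact (z : MvPolynomial (Fin 4) k) f hf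
  rw [Ideal.Quotient.eq_zero_iff_mem, mem_transferIdeal]
  exact ⟨q, hq⟩
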